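/- arXiv:1803.01702 — 3 statements merged into one kernel-verified Lean document; each statement's English description precedes it below -/
import Mathlib

section
/- Let (Ω, P) be a probability space, ξ : T → ℝ a bounded stochastic process, U = {t₁,…,tₙ} a finite ρ-net of T in the sense that the sets B(tᵢ) cover T, and suppose the increments are stationary in the sense that for each i the random variable sup_{t∈B(tᵢ)}(ξ(t) − ξ(tᵢ)) has the same distribution as δ := sup_{t∈B(t₀)}(ξ(t) − ξ(t₀)) for a fixed reference point t₀. Then for any real numbers a > c: P(sup_{t∈U} ξ(t) ≤ c) ≤ P(sup_{t∈T} ξ(t) ≤ a) + n · P(δ ≥ a − c). -/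
open MeasureTheory Set

/-- Lemma 2 (probability part): for a bounded process with a finite net whose covering-set
oscillations are all equidistributed with a fixed variable δ,
P(max over net ≤ c) ≤ P(sup over all of T ≤ a) + n · P(δ ≥ a − c). -/
theorem stmt1 {T : Type*} [Nonempty T] {ι : Type*} [Fintype ι] [Nonempty ι]
    {Ω : Type*} [MeasurableSpace Ω] (P : Measure Ω) [IsProbabilityMeasure P]
    (ξ : T → Ω → ℝ) (hmeas : ∀ t, Measurable (ξ t))
    (hbdd : ∀ ω, BddAbove (Set.range fun s => ξ s ω))
    (t : ι → T) (B : ι → Set T)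
    (hmem : ∀ i, t i ∈ B i) (hcover : (⋃ i, B i) = Set.univ)
    (δ : Ω → ℝ) (hδmeas : Measurable δ)
    (hdistr : ∀ i (x : ℝ),
      P {ω | x ≤ ⨆ s : B i, (ξ (s : T) ω - ξ (t i) ω)} = P {ω | x ≤ δ ω})
    (a c : ℝ) (hac : c < a) :
    P {ω | (⨆ i, ξ (t i) ω) ≤ c}
      ≤ P {ω | (⨆ s : T, ξ s ω) ≤ a} + (Fintype.card ι) * P {ω | a - c ≤ δ ω} := by
  have hsub : {ω | (⨆ i, ξ (t i) ω) ≤ c} ⊆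
      {ω | (⨆ s : T, ξ s ω) ≤ a} ∪
        ⋃ i, {ω | a - c ≤ ⨆ s : B i, (ξ (s : T) ω - ξ (t i) ω)} := by
    intro ω hω
    by_cases h : (⨆ s : T, ξ s ω) ≤ a
    · exact Or.inl h
    · right
      push_neg at h
      obtain ⟨s, hs⟩ := (lt_ciSup_iff (hbdd ω)).mp h
      obtain ⟨i, hi⟩ : ∃ i, s ∈ B i := by
        simpa using Set.mem_iUnion.mp (hcover ▸ Set.mem_univ s)
      refine Set.mem_iUnion.2 ⟨i, ?_⟩
      have hti : ξ (t i) ω ≤ c :=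
        le_trans (le_ciSup (f := fun j => ξ (t j) ω) (Set.finite_range _).bddAbove i) hω
      have hbdd2 : BddAbove (Set.range fun s : B i => ξ (s : T) ω - ξ (t i) ω) := by
        obtain ⟨M, hM⟩ := hbdd ω
        refine ⟨M - ξ (t i) ω, ?_⟩
        rintro x ⟨⟨u, hu⟩, rfl⟩
        have : ξ u ω ≤ M := hM ⟨u, rfl⟩
        simpa using this
      have hle : a - c ≤ ξ s ω - ξ (t i) ω := by linarith
      exact hle.trans (le_ciSup hbdd2 ⟨s, hi⟩)
  calc P {ω | (⨆ i, ξ (t i) ω) ≤ c}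
      ≤ P ({ω | (⨆ s : T, ξ s ω) ≤ a} ∪
          ⋃ i, {ω | a - c ≤ ⨆ s : B i, (ξ (s : T) ω - ξ (t i) ω)}) := measure_mono hsub
    _ ≤ P {ω | (⨆ s : T, ξ s ω) ≤ a}
          + P (⋃ i, {ω | a - c ≤ ⨆ s : B i, (ξ (s : T) ω - ξ (t i) ω)}) :=
        measure_union_le _ _
    _ ≤ P {ω | (⨆ s : T, ξ s ω) ≤ a}
          + ∑ i, P {ω | a - c ≤ ⨆ s : B i, (ξ (s : T) ω - ξ (t i) ω)} :=
        add_le_add (le_refl _) (measure_iUnion_fintype_le _ _)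
    _ = P {ω | (⨆ s : T, ξ s ω) ≤ a} + (Fintype.card ι) * P {ω | a - c ≤ δ ω} := by
        rw [Finset.sum_congr rfl fun i _ => hdistr i (a - c), Finset.sum_const,
          nsmul_eq_mul, Finset.card_univ]
end

section
/- Under the same hypotheses, for any b > 0: E[sup_{t∈U} ξ(t)] ≤ E[sup_{t∈T} ξ(t)] ≤ E[sup_{t∈U} ξ(t)] + b + n · E[(δ − b)₊], where x₊ = max(x,0). -/
open MeasureTheory Set
open scoped ENNReal

/-- Lemma 2 (expectation part): E[max over net] ≤ E[sup over T]
    ≤ E[max over net] + b + n · E[(δ − b)₊]. -/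
theorem stmt2 {T : Type*} [Nonempty T] {ι : Type*} [Fintype ι] [Nonempty ι]
    {Ω : Type*} [MeasurableSpace Ω] (P : Measure Ω) [IsProbabilityMeasure P]
    (ξ : T → Ω → ℝ) (hmeas : ∀ t, Measurable (ξ t))
    (hbdd : ∀ ω, BddAbove (Set.range fun s => ξ s ω))
    (t : ι → T) (B : ι → Set T)
    (hmem : ∀ i, t i ∈ B i) (hcover : (⋃ i, B i) = Set.univ)
    (δ : Ω → ℝ) (hδmeas : Measurable δ) (hδ0 : ∀ ω, 0 ≤ δ ω)
    (hδint : Integrable δ P)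
    (hdistr : ∀ i (x : ℝ),
      P {ω | x ≤ ⨆ s : B i, (ξ (s : T) ω - ξ (t i) ω)} = P {ω | x ≤ δ ω})
    (hintU : Integrable (fun ω => ⨆ i, ξ (t i) ω) P)
    (hintT : Integrable (fun ω => ⨆ s : T, ξ s ω) P)
    (b : ℝ) (hb : 0 < b) :
    (∫ ω, (⨆ i, ξ (t i) ω) ∂P ≤ ∫ ω, (⨆ s : T, ξ s ω) ∂P) ∧
    (∫ ω, (⨆ s : T, ξ s ω) ∂P
      ≤ ∫ ω, (⨆ i, ξ (t i) ω) ∂P + b + (Fintype.card ι) * ∫ ω, max (δ ω - b) 0 ∂P) := by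
  set D : ι → Ω → ℝ := fun i ω => ⨆ s : B i, (ξ (s : T) ω - ξ (t i) ω) with hDdef
  -- boundedness of the ranges defining D
  have hBne : ∀ i, Nonempty (B i) := fun i => ⟨⟨t i, hmem i⟩⟩
  have hBbdd : ∀ i ω, BddAbove (Set.range fun s : B i => ξ (s : T) ω - ξ (t i) ω) := by
    intro i ω
    obtain ⟨M, hM⟩ := hbdd ω
    refine ⟨M - ξ (t i) ω, ?_⟩
    rintro x ⟨s, rfl⟩
    have : ξ (s : T) ω ≤ M := hM ⟨(s : T), rfl⟩
    show ξ (s : T) ω - ξ (t i) ω ≤ M - ξ (t i) ω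
    linarith
  -- pointwise: sup over net ≤ sup over T
  have hUT : ∀ ω, (⨆ i, ξ (t i) ω) ≤ ⨆ s : T, ξ s ω := by
    intro ω
    exact ciSup_le fun i => le_ciSup (hbdd ω) (t i)
  refine ⟨integral_mono hintU hintT hUT, ?_⟩
  -- the key pointwise fact: if sup_T - sup_U - b ≥ x then some D i ≥ b + x
  have key : ∀ ω x, x ≤ (⨆ s : T, ξ s ω) - (⨆ i, ξ (t i) ω) - b →
      ∃ i, b + x ≤ D i ω := by
    intro ω x hx
    have hfin : BddAbove (Set.range fun i => ξ (t i) ω + D i ω) :=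
      (Set.finite_range _).bddAbove
    have hsupT : (⨆ s : T, ξ s ω) ≤ ⨆ i, (ξ (t i) ω + D i ω) := by
      refine ciSup_le fun s => ?_
      have hs : (s : T) ∈ ⋃ i, B i := by rw [hcover]; trivial
      obtain ⟨_, ⟨i, rfl⟩, hsB⟩ := hs
      have h1 : ξ s ω - ξ (t i) ω ≤ D i ω :=
        le_ciSup (hBbdd i ω) (⟨s, hsB⟩ : B i)
      have h2 : ξ (t i) ω + D i ω ≤ ⨆ i, (ξ (t i) ω + D i ω) := le_ciSup hfin i
      linarith
    obtain ⟨i, hi⟩ := exists_eq_ciSup_of_finite (f := fun i => ξ (t i) ω + D i ω)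
    have hti : ξ (t i) ω ≤ ⨆ j, ξ (t j) ω :=
      le_ciSup (f := fun j => ξ (t j) ω) ((Set.finite_range _).bddAbove) i
    refine ⟨i, ?_⟩
    have := hsupT
    rw [← hi] at this
    linarith
  -- define g = (sup_T - sup_U - b)₊
  set g : Ω → ℝ := fun ω => max ((⨆ s : T, ξ s ω) - (⨆ i, ξ (t i) ω) - b) 0 with hgdef
  have hg_meas : AEMeasurable g P :=
    (((hintT.aemeasurable.sub hintU.aemeasurable).sub aemeasurable_const).max
      aemeasurable_const)
  have hg_int : Integrable g P := by
    have : Integrable (fun ω => (⨆ s : T, ξ s ω) - (⨆ i, ξ (t i) ω) - b) P :=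
      (hintT.sub hintU).sub (integrable_const b)
    exact this.sup (integrable_const 0)
  -- measure comparison of level sets for x > 0
  have hlevel : ∀ x : ℝ, 0 < x →
      P {ω | x ≤ g ω} ≤ (Fintype.card ι : ℝ≥0∞) * P {ω | x ≤ max (δ ω - b) 0} := by
    intro x hx
    have hsub : {ω | x ≤ g ω} ⊆ ⋃ i, {ω | b + x ≤ D i ω} := by
      intro ω hω
      have hω' : x ≤ max ((⨆ s : T, ξ s ω) - (⨆ i, ξ (t i) ω) - b) 0 := hω
      have : x ≤ (⨆ s : T, ξ s ω) - (⨆ i, ξ (t i) ω) - b := by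
        rcases le_max_iff.mp hω' with h | h
        · exact h
        · linarith
      obtain ⟨i, hi⟩ := key ω x this
      exact Set.mem_iUnion.mpr ⟨i, hi⟩
    calc P {ω | x ≤ g ω} ≤ P (⋃ i, {ω | b + x ≤ D i ω}) := measure_mono hsub
      _ ≤ ∑ i, P {ω | b + x ≤ D i ω} := measure_iUnion_fintype_le P _
      _ = ∑ _i : ι, P {ω | b + x ≤ δ ω} := by
          refine Finset.sum_congr rfl fun i _ => ?_
          exact hdistr i (b + x)
      _ = (Fintype.card ι : ℝ≥0∞) * P {ω | b + x ≤ δ ω} := by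
          simp [Finset.sum_const, mul_comm]
      _ = (Fintype.card ι : ℝ≥0∞) * P {ω | x ≤ max (δ ω - b) 0} := by
          congr 1
          congr 1
          ext ω
          simp only [Set.mem_setOf_eq, le_max_iff]
          constructor
          · intro h; left; linarith
          · rintro (h | h)
            · linarith
            · linarith
    -- done
  -- the function (δ - b)₊
  set h : Ω → ℝ := fun ω => max (δ ω - b) 0 with hhdef
  have hh_meas : AEMeasurable h P :=
    ((hδmeas.sub measurable_const).max measurable_const).aemeasurable
  have hh_int : Integrable h P := ((hδint.sub (integrable_const b)).sup (integrable_const 0))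
  have hh_nn : 0 ≤ᵐ[P] h := Filter.Eventually.of_forall fun ω => le_max_right _ _
  have hg_nn : 0 ≤ᵐ[P] g := Filter.Eventually.of_forall fun ω => le_max_right _ _
  -- layer cake for g and h
  have lcg := lintegral_eq_lintegral_meas_le P hg_nn hg_meas
  have lch := lintegral_eq_lintegral_meas_le P hh_nn hh_meas
  -- lintegral comparison
  have hlin : ∫⁻ ω, ENNReal.ofReal (g ω) ∂P
      ≤ (Fintype.card ι : ℝ≥0∞) * ∫⁻ ω, ENNReal.ofReal (h ω) ∂P := by
    rw [lcg, lch, ← lintegral_const_mul' _ _ (by simp : (Fintype.card ι : ℝ≥0∞) ≠ ⊤)]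
    have hanti : Antitone fun x : ℝ => (Fintype.card ι : ℝ≥0∞) * P {ω | x ≤ h ω} := by
      intro x y hxy
      exact mul_le_mul_right (measure_mono fun ω hω => le_trans hxy hω) _
    refine setLIntegral_mono_ae hanti.measurable.aemeasurable
      (Filter.Eventually.of_forall ?_)
    intro x hx
    exact hlevel x hx
  -- finiteness
  have hh_fin : ∫⁻ ω, ENNReal.ofReal (h ω) ∂P < ⊤ := hh_int.lintegral_lt_top
  -- convert to real integrals
  have hg_eq : ∫ ω, g ω ∂P = (∫⁻ ω, ENNReal.ofReal (g ω) ∂P).toReal := by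
    rw [integral_eq_lintegral_of_nonneg_ae hg_nn hg_int.aestronglyMeasurable]
  have hh_eq : ∫ ω, h ω ∂P = (∫⁻ ω, ENNReal.ofReal (h ω) ∂P).toReal := by
    rw [integral_eq_lintegral_of_nonneg_ae hh_nn hh_int.aestronglyMeasurable]
  have hfinal : ∫ ω, g ω ∂P ≤ (Fintype.card ι : ℝ) * ∫ ω, h ω ∂P := by
    rw [hg_eq, hh_eq]
    have h1 : (∫⁻ ω, ENNReal.ofReal (g ω) ∂P).toReal
        ≤ ((Fintype.card ι : ℝ≥0∞) * ∫⁻ ω, ENNReal.ofReal (h ω) ∂P).toReal := by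
      refine ENNReal.toReal_mono ?_ hlin
      exact ENNReal.mul_ne_top (by simp) hh_fin.ne
    rw [ENNReal.toReal_mul] at h1
    simpa using h1
  -- combine
  have hGg : ∫ ω, ((⨆ s : T, ξ s ω) - (⨆ i, ξ (t i) ω) - b) ∂P ≤ ∫ ω, g ω ∂P :=
    integral_mono ((hintT.sub hintU).sub (integrable_const b)) hg_int
      (fun ω => le_max_left _ _)
  have e1 : ∫ ω, ((⨆ s : T, ξ s ω) - (⨆ i, ξ (t i) ω) - b) ∂P
      = ∫ ω, ((⨆ s : T, ξ s ω) - (⨆ i, ξ (t i) ω)) ∂P - ∫ _ω, (b : ℝ) ∂P :=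
    integral_sub (hintT.sub hintU) (integrable_const b)
  have e2 : ∫ ω, ((⨆ s : T, ξ s ω) - (⨆ i, ξ (t i) ω)) ∂P
      = ∫ ω, (⨆ s : T, ξ s ω) ∂P - ∫ ω, (⨆ i, ξ (t i) ω) ∂P :=
    integral_sub hintT hintU
  have e3 : ∫ _ω, (b : ℝ) ∂P = b := by simp
  rw [e1, e2, e3] at hGg
  have := le_trans hGg hfinal
  linarith
end

section
/- Let g : [0,∞) → (0,∞) be bounded, continuous, and decreasing with ∫₀^∞ |log g(x)|/(1+x²) dx < ∞, and let f : ℝ^d → (0,∞) satisfy f(λ) ≥ g(|λ|) and ∫_{|λ|>δ} f(λ)dλ < ∞ for every δ > 0. Suppose U : ℝ → (0,∞) is an even entire function of exponential type with sup_x U(εx)/g(x) < ∞ for every ε > 0. Then for any fixed 0 < ε < 1, the function v(λ) = U(|λ|) − U(ε|λ|) satisfies ∫ v(λ)²/f(λ) dλ < ∞. -/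
open MeasureTheory

/-- Step in Lemma 5: with U an even positive entire function of exponential type
dominated (after any scaling ε) by the minorant g of the spectral density f,
the function v(λ) = U(|λ|) − U(ε|λ|) satisfies ∫ v²/f < ∞, i.e. v/f ∈ L²(f dλ). -/
theorem stmt13 (d : ℕ) (g : ℝ → ℝ) (hgpos : ∀ x, 0 ≤ x → 0 < g x)
    (hgbdd : ∀ x, 0 ≤ x → g x ≤ g 0) (hgcont : Continuous g)
    (hgdec : AntitoneOn g (Set.Ici 0))
    (hgint : MeasureTheory.IntegrableOn
      (fun x => |Real.log (g x)| / (1 + x ^ 2)) (Set.Ici (0 : ℝ)))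
    (f : EuclideanSpace ℝ (Fin d) → ℝ) (hfmeas : Measurable f)
    (hfg : ∀ lam, g ‖lam‖ ≤ f lam)
    (hfint : ∀ δ : ℝ, 0 < δ → MeasureTheory.IntegrableOn f {lam | δ < ‖lam‖})
    (U : ℝ → ℝ) (hUpos : ∀ x, 0 < U x) (hUeven : ∀ x, U (-x) = U x)
    (hUentire : ∃ E : ℂ → ℂ, Differentiable ℂ E ∧ (∀ x : ℝ, E x = U x) ∧
      ∃ A B : ℝ, ∀ z, ‖E z‖ ≤ A * Real.exp (B * ‖z‖))
    (hUg : ∀ ε : ℝ, 0 < ε → ∃ C : ℝ, ∀ x, 0 ≤ x → U (ε * x) ≤ C * g x)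
    (ε : ℝ) (hε : 0 < ε) (hε1 : ε < 1) :
    MeasureTheory.Integrable (fun lam : EuclideanSpace ℝ (Fin d) =>
      (U ‖lam‖ - U (ε * ‖lam‖)) ^ 2 / f lam) := by

  obtain ⟨E, hEdiff, hEU, -⟩ := hUentire
  have hUcont : Continuous U := by
    have hU : U = fun x : ℝ => (E (x : ℂ)).re := by
      funext x; rw [hEU x, Complex.ofReal_re]
    rw [hU]
    exact Complex.continuous_re.comp (hEdiff.continuous.comp Complex.continuous_ofReal)
  obtain ⟨C₁, hC₁⟩ := hUg 1 one_pos
  obtain ⟨C₂, hC₂⟩ := hUg ε hε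
  set C := max C₁ C₂ with hCdef
  have hfpos : ∀ lam, 0 < f lam := fun lam =>
    lt_of_lt_of_le (hgpos _ (norm_nonneg _)) (hfg lam)
  have hCpos : 0 < C := by
    have h1 := hC₁ 0 le_rfl
    have h2 := hUpos (1 * 0)
    have hg0 := hgpos 0 le_rfl
    have : 0 < C₁ := by nlinarith
    exact lt_of_lt_of_le this (le_max_left _ _)
  have key : ∀ lam : EuclideanSpace ℝ (Fin d),
      |U ‖lam‖ - U (ε * ‖lam‖)| ≤ C * g ‖lam‖ := by
    intro lam
    have hx := norm_nonneg lam
    have hg := (hgpos _ hx).le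
    have h1 : U ‖lam‖ ≤ C * g ‖lam‖ := by
      have h := hC₁ ‖lam‖ hx
      rw [one_mul] at h
      nlinarith [le_max_left C₁ C₂]
    have h2 : U (ε * ‖lam‖) ≤ C * g ‖lam‖ := by
      have h := hC₂ ‖lam‖ hx
      nlinarith [le_max_right C₁ C₂]
    rw [abs_sub_le_iff]
    constructor
    · nlinarith [hUpos (ε * ‖lam‖)]
    · nlinarith [hUpos ‖lam‖]
  have hmeas : AEStronglyMeasurable
      (fun lam : EuclideanSpace ℝ (Fin d) =>
        (U ‖lam‖ - U (ε * ‖lam‖)) ^ 2 / f lam) volume := by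
    apply Measurable.aestronglyMeasurable
    exact ((((hUcont.comp continuous_norm).sub
      (hUcont.comp (continuous_const.mul continuous_norm))).pow 2).measurable).div hfmeas
  rw [← MeasureTheory.integrableOn_univ]
  have hsplit : (Set.univ : Set (EuclideanSpace ℝ (Fin d))) =
      Metric.closedBall 0 1 ∪ {lam | 1 < ‖lam‖} := by
    ext lam
    simp [Metric.mem_closedBall, dist_zero_right, le_or_gt]
  rw [hsplit]
  apply MeasureTheory.IntegrableOn.union
  · refine MeasureTheory.Integrable.mono' (g := fun _ => C ^ 2 * g 0)
      (MeasureTheory.integrableOn_const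
        (MeasureTheory.measure_closedBall_lt_top (x := (0 : EuclideanSpace ℝ (Fin d))) (r := 1)).ne enorm_ne_top)
      hmeas.restrict (Filter.Eventually.of_forall fun lam => ?_)
    have hx := norm_nonneg lam
    have hnn : 0 ≤ (U ‖lam‖ - U (ε * ‖lam‖)) ^ 2 / f lam :=
      div_nonneg (sq_nonneg _) (hfpos lam).le
    rw [Real.norm_eq_abs, abs_of_nonneg hnn, div_le_iff₀ (hfpos lam)]
    have hk := key lam
    have hsq : (U ‖lam‖ - U (ε * ‖lam‖)) ^ 2 ≤ (C * g ‖lam‖) ^ 2 := by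
      have := pow_le_pow_left₀ (abs_nonneg _) hk 2
      rwa [sq_abs] at this
    have hprod : g ‖lam‖ * g ‖lam‖ ≤ g 0 * f lam :=
      mul_le_mul (hgbdd ‖lam‖ hx) (hfg lam) (hgpos ‖lam‖ hx).le (hgpos 0 le_rfl).le
    nlinarith [sq_nonneg C]
  · refine MeasureTheory.Integrable.mono'
      (((hfint 1 one_pos).const_mul (C ^ 2)))
      hmeas.restrict (Filter.Eventually.of_forall fun lam => ?_)
    have hx := norm_nonneg lam
    have hnn : 0 ≤ (U ‖lam‖ - U (ε * ‖lam‖)) ^ 2 / f lam :=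
      div_nonneg (sq_nonneg _) (hfpos lam).le
    rw [Real.norm_eq_abs, abs_of_nonneg hnn, div_le_iff₀ (hfpos lam)]
    have hk := key lam
    have hsq : (U ‖lam‖ - U (ε * ‖lam‖)) ^ 2 ≤ (C * g ‖lam‖) ^ 2 := by
      have := pow_le_pow_left₀ (abs_nonneg _) hk 2
      rwa [sq_abs] at this
    nlinarith [hfg lam, hgpos ‖lam‖ hx, sq_nonneg C,
      mul_self_le_mul_self (hgpos ‖lam‖ hx).le (hfg lam)]
end
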